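/- Let X be a left distributive birack and let k ≥ 2. Then the following are equivalent: (i) X is left k-reductive; (ii) X is left k-permutational; (iii) the left multiplication group LMlt(X), the subgroup of the symmetric group on X generated by all left translations L_x, is nilpotent of class at most k−1. -/

import Mathlib

open Subgroup Equiv
open scoped commutatorElement

theorem Equiv.Perm.apply_inv_self {α : Type*} (f : Equiv.Perm α) (x : α) : f (f⁻¹ x) = x :=
  f.apply_symm_apply x

theorem Equiv.Perm.inv_apply_self {α : Type*} (f : Equiv.Perm α) (x : α) : f⁻¹ (f x) = x :=
  f.symm_apply_apply x

section aux
variable {X : Type*} (o : X → X → X) (L : X → Equiv.Perm X)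

def Kprop (j : ℕ) (p : Equiv.Perm X) : Prop :=
  ∀ (x : X) (l : List X), l.length = j → List.foldl o (p x) l = List.foldl o x l

variable {o L}

lemma Kprop.one (j : ℕ) : Kprop o j 1 := fun _ _ _ => rfl

lemma Kprop.mul {j : ℕ} {p q : Equiv.Perm X} (hp : Kprop o j p) (hq : Kprop o j q) :
    Kprop o j (p * q) := fun x l hl => by
  have h : (p * q) x = p (q x) := rfl
  rw [h, hp _ l hl, hq _ l hl]

lemma Kprop.inv {j : ℕ} {p : Equiv.Perm X} (hp : Kprop o j p) : Kprop o j p⁻¹ :=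
  fun x l hl => by
    conv_rhs => rw [show x = p (p⁻¹ x) from (Equiv.Perm.apply_inv_self p x).symm]
    rw [hp _ l hl]

variable (hLD : ∀ x y z : X, o x (o y z) = o (o x y) (o x z))
    (hL : ∀ x a : X, L x a = o x a)

include hLD hL

lemma equivar {p : Equiv.Perm X} (hp : p ∈ Subgroup.closure (Set.range L)) :
    ∀ a b : X, p (o a b) = o (p a) (p b) := by
  induction hp using Subgroup.closure_induction with
  | mem s hs =>
      obtain ⟨x, rfl⟩ := hs
      intro a b
      simp only [hL]
      exact hLD x a b
  | one => intro a b; rfl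
  | mul p q _ _ hp hq =>
      intro a b
      have h : (p * q) (o a b) = p (q (o a b)) := rfl
      rw [h, hq, hp]; rfl
  | inv p _ hp =>
      intro a b
      have h1 : p (o (p⁻¹ a) (p⁻¹ b)) = o a b := by
        rw [hp, Equiv.Perm.apply_inv_self, Equiv.Perm.apply_inv_self]
      calc p⁻¹ (o a b) = p⁻¹ (p (o (p⁻¹ a) (p⁻¹ b))) := by rw [h1]
        _ = o (p⁻¹ a) (p⁻¹ b) := Equiv.Perm.inv_apply_self p _

lemma equivar_foldl {p : Equiv.Perm X} (hp : p ∈ Subgroup.closure (Set.range L))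
    (x : X) (l : List X) :
    p (List.foldl o x l) = List.foldl o (p x) (l.map p) := by
  induction l generalizing x with
  | nil => rfl
  | cons t l ih =>
      simp only [List.foldl_cons, List.map_cons]
      rw [ih, equivar hLD hL hp]

lemma Lconj (a b : X) : L (o a b) = L a * L b * (L a)⁻¹ := by
  ext t
  have ht : t = L a ((L a)⁻¹ t) := (Equiv.Perm.apply_inv_self (L a) t).symm
  have h : (L a * L b * (L a)⁻¹) t = L a (L b ((L a)⁻¹ t)) := rfl
  rw [h]
  conv_lhs => rw [ht]
  simp only [hL]
  exact (hLD a b ((L a)⁻¹ t)).symm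

lemma oxx (x t : X) : o (o x x) t = o x t := by
  have h := Lconj hLD hL x x
  have h2 : L (o x x) t = (L x * L x * (L x)⁻¹) t := by rw [h]
  simpa [hL, Equiv.Perm.mul_apply, Equiv.Perm.inv_apply_self] using h2

lemma foldl_oxx (x : X) (t : X) (l : List X) :
    List.foldl o (o x x) (t :: l) = List.foldl o x (t :: l) := by
  simp only [List.foldl_cons, oxx hLD hL]

/-- normality of `Kprop` under conjugation by elements of the closure. -/
lemma Kprop.conj {j : ℕ} {p q : Equiv.Perm X}
    (hp : p ∈ Subgroup.closure (Set.range L)) (hq : Kprop o j q) :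
    Kprop o j (p * q * p⁻¹) := by
  intro x l hl
  have e1 : (p * q * p⁻¹) x = p (q (p⁻¹ x)) := rfl
  have hmap : (l.map p.symm).map p = l := by
    simp [List.map_map, Function.comp_def]
  calc List.foldl o ((p * q * p⁻¹) x) l
      = List.foldl o (p (q (p⁻¹ x))) ((l.map p.symm).map p) := by rw [e1, hmap]
    _ = p (List.foldl o (q (p⁻¹ x)) (l.map p.symm)) := (equivar_foldl hLD hL hp _ _).symm
    _ = p (List.foldl o (p⁻¹ x) (l.map p.symm)) := by
        rw [hq _ _ (by simp [hl])]
    _ = List.foldl o (p (p⁻¹ x)) ((l.map p.symm).map p) := equivar_foldl hLD hL hp _ _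
    _ = List.foldl o x l := by rw [Equiv.Perm.apply_inv_self, hmap]

/-- commutator drop: if `Kprop (j+1) g`, `g, h` in the closure, then the commutator
has `Kprop j`. -/
lemma Kprop.comm {j : ℕ} {g h : Equiv.Perm X}
    (hg : g ∈ Subgroup.closure (Set.range L)) (hgK : Kprop o (j + 1) g)
    (hh : h ∈ Subgroup.closure (Set.range L)) :
    Kprop o j (g * h * g⁻¹ * h⁻¹) := by
  induction hh using Subgroup.closure_induction with
  | mem s hs =>
      obtain ⟨z, rfl⟩ := hs
      intro x l hl
      set y := (L z)⁻¹ x with hy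
      have hx : x = o z y := by rw [hy, ← hL, Equiv.Perm.apply_inv_self]
      have e1 : (g * L z * g⁻¹ * (L z)⁻¹) x = o (g z) y := by
        have : (g * L z * g⁻¹ * (L z)⁻¹) x = g (L z (g⁻¹ y)) := rfl
        rw [this, hL, equivar hLD hL hg, Equiv.Perm.apply_inv_self]
      rw [e1]
      have h2 := hgK z (y :: l) (by simp [hl])
      simpa only [List.foldl_cons, hx] using h2
  | one =>
      have : g * 1 * g⁻¹ * 1⁻¹ = 1 := by group
      rw [this]; exact Kprop.one j
  | mul p q hp hq ihp ihq =>
      have e : g * (p * q) * g⁻¹ * (p * q)⁻¹ =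
          (g * p * g⁻¹ * p⁻¹) * (p * (g * q * g⁻¹ * q⁻¹) * p⁻¹) := by group
      rw [e]
      exact ihp.mul (Kprop.conj hLD hL hp ihq)
  | inv p hp ihp =>
      have e : g * p⁻¹ * g⁻¹ * (p⁻¹)⁻¹ = p⁻¹ * (g * p * g⁻¹ * p⁻¹)⁻¹ * (p⁻¹)⁻¹ := by group
      rw [e]
      exact Kprop.conj hLD hL (inv_mem hp) ihp.inv

/-- the subgroup of `LMlt(X)` of permutations not affecting folds of length `j`. -/
def Ksub (o : X → X → X) (L : X → Equiv.Perm X) (j : ℕ) :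
    Subgroup ↥(Subgroup.closure (Set.range L)) where
  carrier := {g | Kprop o j (g : Equiv.Perm X)}
  one_mem' := Kprop.one j
  mul_mem' := fun hp hq => hp.mul hq
  inv_mem' := fun hp => hp.inv

omit hLD hL in
lemma mem_Ksub {j : ℕ} {g : ↥(Subgroup.closure (Set.range L))} :
    g ∈ Ksub o L j ↔ Kprop o j (g : Equiv.Perm X) := Iff.rfl

/-- the commutator step -/
lemma comm_Ksub (j : ℕ) : ⁅Ksub o L (j + 1), (⊤ : Subgroup _)⁆ ≤ Ksub o L j := by
  rw [Subgroup.commutator_le]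
  intro g hg h _
  have := Kprop.comm hLD hL g.2 hg h.2
  exact this

/-- generators satisfy `Kprop (k-1)` assuming `k`-permutationality. -/
lemma top_Ksub {m : ℕ}
    (h2 : ∀ (x y : X) (l : List X), l.length = m + 2 →
      List.foldl o x l = List.foldl o y l) :
    ∀ p ∈ Subgroup.closure (Set.range L), Kprop o (m + 1) p := by
  intro p hp
  induction hp using Subgroup.closure_induction with
  | mem s hs =>
      obtain ⟨y, rfl⟩ := hs
      intro x l hl
      obtain ⟨t, l', rfl⟩ : ∃ t l', l = t :: l' := by
        cases l with
        | nil => simp at hl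
        | cons t l' => exact ⟨t, l', rfl⟩
      rw [hL]
      have e1 : List.foldl o (o y x) (t :: l') = List.foldl o y (x :: t :: l') := rfl
      rw [e1, h2 y x (x :: t :: l') (by simp at hl ⊢; omega)]
      have e2 : List.foldl o x (x :: t :: l') = List.foldl o (o x x) (t :: l') := rfl
      rw [e2, foldl_oxx hLD hL]
  | one => exact Kprop.one _
  | mul p q _ _ ihp ihq => exact ihp.mul ihq
  | inv p _ ihp => exact ihp.inv

lemma chain_Ksub {m : ℕ}
    (h2 : ∀ (x y : X) (l : List X), l.length = m + 2 →
      List.foldl o x l = List.foldl o y l) :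
    ∀ n, n ≤ m + 1 →
      (⊤ : Subgroup ↥(Subgroup.closure (Set.range L))).lowerCentralSeries n ≤ Ksub o L (m + 1 - n) := by
  intro n
  induction n with
  | zero =>
      intro _ g _
      exact top_Ksub hLD hL h2 _ g.2
  | succ n ih =>
      intro hn
      have hn' : n ≤ m + 1 := by omega
      have e : m + 1 - n = (m + 1 - (n + 1)) + 1 := by omega
      calc (⊤ : Subgroup ↥(Subgroup.closure (Set.range L))).lowerCentralSeries (n + 1)
          = ⁅(⊤ : Subgroup ↥(Subgroup.closure (Set.range L))).lowerCentralSeries n, ⊤⁆ := rfl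
        _ ≤ ⁅Ksub o L (m + 1 - n), ⊤⁆ := Subgroup.commutator_mono (ih hn') le_rfl
        _ = ⁅Ksub o L ((m + 1 - (n + 1)) + 1), ⊤⁆ := by rw [← e]
        _ ≤ Ksub o L (m + 1 - (n + 1)) := comm_Ksub hLD hL _

/-- direction (ii) → (iii) -/
lemma perm_to_nilp {m : ℕ}
    (h2 : ∀ (x y : X) (l : List X), l.length = m + 2 →
      List.foldl o x l = List.foldl o y l) :
    (⊤ : Subgroup ↥(Subgroup.closure (Set.range L))).lowerCentralSeries (m + 1) = ⊥ := by
  rw [eq_bot_iff]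
  intro g hg
  have hK : g ∈ Ksub o L 0 := by
    have := chain_Ksub hLD hL h2 (m + 1) le_rfl hg
    simpa using this
  rw [mem_Ksub] at hK
  have : (g : Equiv.Perm X) = 1 := by
    ext x
    exact hK x [] rfl
  simpa [Subgroup.mem_bot] using Subtype.ext this

/-- key induction for (iii) → (ii): the translation by a fold differs from another
fold's translation by an element of the corresponding lower central series term. -/
lemma fold_congr (l : List X) (x y : X) :
    ∃ c : ↥(Subgroup.closure (Set.range L)),
      c ∈ (⊤ : Subgroup ↥(Subgroup.closure (Set.range L))).lowerCentralSeries l.length ∧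
      (c : Equiv.Perm X) * L (List.foldl o y l) = L (List.foldl o x l) := by
  induction l using List.reverseRecOn with
  | nil =>
      refine ⟨⟨L x * (L y)⁻¹,
        mul_mem (Subgroup.subset_closure ⟨x, rfl⟩)
          (inv_mem (Subgroup.subset_closure ⟨y, rfl⟩))⟩, trivial, ?_⟩
      simp [mul_assoc]
  | append_singleton l t ih =>
      obtain ⟨c, hc, hEq⟩ := ih
      set a := List.foldl o x l with ha
      set b := List.foldl o y l with hb
      have hBmem : L b ∈ Subgroup.closure (Set.range L) :=
        Subgroup.subset_closure ⟨b, rfl⟩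
      have hTmem : L t ∈ Subgroup.closure (Set.range L) :=
        Subgroup.subset_closure ⟨t, rfl⟩
      set β : ↥(Subgroup.closure (Set.range L)) :=
        ⟨L b * L t * (L b)⁻¹, mul_mem (mul_mem hBmem hTmem) (inv_mem hBmem)⟩ with hβ
      refine ⟨⁅c, β⁆, ?_, ?_⟩
      · have : ⁅c, β⁆ ∈ ⁅(⊤ : Subgroup ↥(Subgroup.closure (Set.range L))).lowerCentralSeries l.length,
            (⊤ : Subgroup _)⁆ :=
          Subgroup.commutator_mem_commutator hc (Subgroup.mem_top β)
        simpa using this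
      · have e1 : List.foldl o x (l ++ [t]) = o a t := by simp [ha]
        have e2 : List.foldl o y (l ++ [t]) = o b t := by simp [hb]
        rw [e1, e2, Lconj hLD hL, Lconj hLD hL]
        have hcoe : ((⁅c, β⁆ : ↥(Subgroup.closure (Set.range L))) : Equiv.Perm X)
            = (c : Equiv.Perm X) * (β : Equiv.Perm X) * (c : Equiv.Perm X)⁻¹
              * (β : Equiv.Perm X)⁻¹ := rfl
        rw [hcoe, hβ]
        rw [← hEq]
        group

/-- direction (iii) → (ii) -/
lemma nilp_to_perm {m : ℕ}
    (h3 : (⊤ : Subgroup ↥(Subgroup.closure (Set.range L))).lowerCentralSeries (m + 1) = ⊥) :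
    ∀ (x y : X) (l : List X), l.length = m + 2 →
      List.foldl o x l = List.foldl o y l := by
  intro x y l hl
  obtain ⟨l', t, rfl⟩ : ∃ l' t, l = l' ++ [t] := by
    rcases l.eq_nil_or_concat' with h | ⟨l', t, rfl⟩
    · subst h; simp at hl
    · exact ⟨l', t, rfl⟩
  have hl' : l'.length = m + 1 := by simp at hl; omega
  obtain ⟨c, hc, hEq⟩ := fold_congr hLD hL l' x y
  rw [hl', h3, Subgroup.mem_bot] at hc
  rw [hc] at hEq
  simp only [OneMemClass.coe_one, one_mul] at hEq
  have : L (List.foldl o x l') t = L (List.foldl o y l') t := by rw [hEq]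
  simpa [hL] using this

end aux

/-- For a left distributive birack `(X, o, od, u, ud)` (where `o` is `∘`,
`od` is `\∘`, `u` is `•`, `ud` is `/•`) and `k ≥ 2`, the following are equivalent:
(i) left `k`-reductivity; (ii) left `k`-permutationality; (iii) the left multiplication
group `LMlt(X) = ⟨L_x : x ∈ X⟩ ≤ Sym(X)` is nilpotent of class at most `k-1`.
Here `L : X → Equiv.Perm X` is the family of left translations (`L x a = x∘a`), and
`(…((a∘x₁)∘x₂)…)∘x_k` is encoded as `List.foldl o a [x₁,…,x_k]`. -/
theorem stmt_16 {X : Type*} (o od u ud : X → X → X)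
    (h₁ : ∀ x y : X, o x (od x y) = y)
    (h₂ : ∀ x y : X, od x (o x y) = y)
    (h₃ : ∀ x y : X, u (ud y x) x = y)
    (h₄ : ∀ x y : X, ud (u y x) x = y)
    (h₅ : ∀ x y z : X, o x (o y z) = o (o x y) (o (u x y) z))
    (h₆ : ∀ x y z : X, u (o x y) (o (u x y) z) = o (u x (o y z)) (u y z))
    (h₇ : ∀ x y z : X, u (u x y) z = u (u x (o y z)) (u y z))
    (hLD : ∀ x y z : X, o x (o y z) = o (o x y) (o x z))
    (L : X → Equiv.Perm X) (hL : ∀ x a : X, L x a = o x a)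
    (k : ℕ) (hk : 2 ≤ k) :
    List.TFAE
      [∀ (x₀ x₁ : X) (l : List X), l.length + 1 = k →
         List.foldl o x₀ (x₁ :: l) = List.foldl o x₁ l,
       ∀ (x y : X) (l : List X), l.length = k →
         List.foldl o x l = List.foldl o y l,
       (⊤ : Subgroup (↥(Subgroup.closure (Set.range L)))).lowerCentralSeries (k - 1) = ⊥] := by
  obtain ⟨m, rfl⟩ : ∃ m, k = m + 2 := ⟨k - 2, by omega⟩
  have hk1 : m + 2 - 1 = m + 1 := by omega
  tfae_have 1 → 2
  · intro hi x y l hl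
    obtain ⟨x₁, l', rfl⟩ : ∃ x₁ l', l = x₁ :: l' := by
      cases l with
      | nil => simp at hl
      | cons a b => exact ⟨a, b, rfl⟩
    have hl' : l'.length + 1 = m + 2 := by simpa using hl
    rw [show List.foldl o x (x₁ :: l') = List.foldl o x₁ l' from hi x x₁ l' hl',
      show List.foldl o y (x₁ :: l') = List.foldl o x₁ l' from hi y x₁ l' hl']
  tfae_have 2 → 1
  · intro hii x₀ x₁ l hl
    have h1 : List.foldl o x₀ (x₁ :: l) = List.foldl o x₁ (x₁ :: l) :=
      hii x₀ x₁ (x₁ :: l) (by simpa using hl)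
    rw [h1]
    obtain ⟨t, l', rfl⟩ : ∃ t l', l = t :: l' := by
      cases l with
      | nil => simp at hl
      | cons a b => exact ⟨a, b, rfl⟩
    have h2' : List.foldl o x₁ (x₁ :: t :: l') = List.foldl o (o x₁ x₁) (t :: l') := rfl
    rw [h2', foldl_oxx hLD hL]
  tfae_have 2 → 3
  · intro hii
    rw [hk1]
    exact perm_to_nilp hLD hL (fun x y l hl => hii x y l (by omega))
  tfae_have 3 → 2
  · intro hiii x y l hl
    rw [hk1] at hiii
    exact nilp_to_perm hLD hL hiii x y l (by omega)
  tfae_finish
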